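/- Consider the arrangement of two closed curves on S^2 intersecting in 2k points (k ≥ 0), whose intersection poset P has rank 3 with 2 atoms (the curves) and k coatoms (the point pairs), every coatom covering every atom. Then Ψ(P) = (a+b)(a + (k−1)b), and the cd-index of the induced stratification T is Ψ(T) = ω(a·Ψ(P))* = c^3 + 2(k−1)·dc + 2k·cd. -/

import Mathlib

open scoped TensorProduct
open scoped Classical

noncomputable section

abbrev Alg : Type := MonoidAlgebra ℤ (FreeMonoid Bool)

def va : Alg := MonoidAlgebra.of ℤ (FreeMonoid Bool) (FreeMonoid.of false)
def vb : Alg := MonoidAlgebra.of ℤ (FreeMonoid Bool) (FreeMonoid.of true)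

def monoOf (l : List Bool) : Alg := MonoidAlgebra.of ℤ (FreeMonoid Bool) (FreeMonoid.ofList l)

def toF (x : Alg) : FreeMonoid Bool →₀ ℤ := x.coeff

/-- The weight of a chain encoded as a strictly increasing map `f : Fin (k+1) → P`. -/
def wtChain {P : Type} (ρ : P → ℕ) {k : ℕ} (f : Fin (k+1) → P) : Alg :=
  (List.ofFn (fun i : Fin k =>
    (va - vb) ^ (ρ (f i.succ) - ρ (f i.castSucc) - 1) *
      (if (i : ℕ) + 1 < k then vb else 1))).prod

def zetaChain {P : Type} (zb : P → P → ℤ) {k : ℕ} (f : Fin (k+1) → P) : ℤ :=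
  ∏ i : Fin k, zb (f i.castSucc) (f i.succ)

/-- The ab-index of the interval `[lo, hi]` of a quasi-graded poset `(P, ρ, zb)`. -/
def PsiI {P : Type} [Fintype P] [PartialOrder P] (ρ : P → ℕ) (zb : P → P → ℤ)
    (lo hi : P) : Alg :=
  ∑ k ∈ Finset.range (Fintype.card P + 1),
    ∑ f : Fin (k+1) → P,
      if StrictMono f ∧ f 0 = lo ∧ f (Fin.last k) = hi
      then zetaChain zb f • wtChain ρ f else 0

/-- The algebra map `κ` with `κ(a) = a - b`, `κ(b) = 0`. -/
def kappa : Alg →ₐ[ℤ] Alg :=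
  MonoidAlgebra.lift ℤ Alg (FreeMonoid Bool)
    (FreeMonoid.lift (fun s => if s then 0 else va - vb))

/-- The algebra map `λ̄` with `λ̄(a) = 0`, `λ̄(b) = a - b`. -/
def lambdabar : Alg →ₐ[ℤ] Alg :=
  MonoidAlgebra.lift ℤ Alg (FreeMonoid Bool)
    (FreeMonoid.lift (fun s => if s then va - vb else 0))

/-- `η` on monomials: `b^m a^k ↦ 2 (a-b)^(m+k)`, other monomials to `0`. -/
def etaMon (w : FreeMonoid Bool) : Alg :=
  if ∃ m k : ℕ, FreeMonoid.toList w = List.replicate m true ++ List.replicate k false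
  then (2 : ℤ) • (va - vb) ^ (FreeMonoid.toList w).length else 0

def etaOp (x : Alg) : Alg := (toF x).sum fun w c => c • etaMon w

/-- The letter-deletion coproduct on `Z⟨a,b⟩`. -/
def Delta (x : Alg) : Alg ⊗[ℤ] Alg :=
  (toF x).sum fun w c => c •
    ∑ i ∈ Finset.range (FreeMonoid.toList w).length,
      monoOf ((FreeMonoid.toList w).take i) ⊗ₜ[ℤ] monoOf ((FreeMonoid.toList w).drop (i+1))

/-- The Sweedler-style convolution `x ↦ Σ F(x₍₁₎) · b · G(x₍₂₎)`. -/
def sweedler (F G : Alg → Alg) (x : Alg) : Alg :=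
  (toF x).sum fun w c => c •
    ∑ i ∈ Finset.range (FreeMonoid.toList w).length,
      F (monoOf ((FreeMonoid.toList w).take i)) * vb *
        G (monoOf ((FreeMonoid.toList w).drop (i+1)))

/-- `phiAux n = φ_{n+1}`, defined by `φ₁ = κ` and `φ_{k+1}(w) = Σ φ_k(w₍₁₎) · b · η(w₍₂₎)`. -/
def phiAux : ℕ → Alg → Alg
  | 0 => fun x => kappa x
  | (n+1) => fun x => sweedler (phiAux n) etaOp x

def maxLen (x : Alg) : ℕ := (toF x).support.sup fun w => (FreeMonoid.toList w).length

/-- The operator `φ = Σ_{k ≥ 1} φ_k` (the sum is finite on any given polynomial). -/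
def phi (x : Alg) : Alg := ∑ k ∈ Finset.range (maxLen x + 1), phiAux k x

/-- `ω` on a monomial: replace each occurrence of `ab` by `2d` and remaining letters by `c`. -/
def omegaList : List Bool → Alg
  | [] => 1
  | false :: true :: rest => ((2:ℤ) • (va * vb + vb * va)) * omegaList rest
  | _ :: rest => (va + vb) * omegaList rest

def omegaOp (x : Alg) : Alg := (toF x).sum fun w c => c • omegaList (FreeMonoid.toList w)

/-- The operator `G(w) = φ(w)·b + Σ φ(w₍₁₎)·b·λ̄(w₍₂₎)·(a-b)`. -/
def Gop (w : Alg) : Alg := phi w * vb + sweedler phi (fun y => lambdabar y) w * (va - vb)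

/-- The reversal map `u ↦ u*` reading each monomial backwards. -/
def revOp (x : Alg) : Alg :=
  (toF x).sum fun w c =>
    MonoidAlgebra.single (FreeMonoid.ofList (FreeMonoid.toList w).reverse) c

/-- `H'` deletes the last letter of each monomial, `H'(1) = 0`. -/
def Hp (x : Alg) : Alg :=
  (toF x).sum fun w c => if w = 1 then 0 else c • monoOf ((FreeMonoid.toList w).dropLast)

end
/-- The proper part of the intersection poset: two atoms (the curves) and `k`
coatoms (the point pairs). -/
inductive Mid (k : ℕ) where
  | atom : Bool → Mid k
  | coatom : Fin k → Mid k
deriving DecidableEq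

instance {k : ℕ} : PartialOrder (Mid k) where
  le x y := x = y ∨ ∃ s j, x = Mid.atom s ∧ y = Mid.coatom j
  le_refl x := Or.inl rfl
  le_trans x y z h1 h2 := by
    rcases h1 with rfl | ⟨s, j, rfl, rfl⟩
    · exact h2
    · rcases h2 with rfl | ⟨s', j', h, _⟩
      · exact Or.inr ⟨s, j, rfl, rfl⟩
      · exact absurd h (by simp)
  le_antisymm x y h1 h2 := by
    rcases h1 with rfl | ⟨s, j, rfl, rfl⟩
    · rfl
    · rcases h2 with h | ⟨s', j', h, _⟩
      · exact h.symm
      · exact absurd h (by simp)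

instance {k : ℕ} : Fintype (Mid k) :=
  Fintype.ofEquiv (Bool ⊕ Fin k)
    { toFun := fun p => p.elim Mid.atom Mid.coatom
      invFun := fun x => match x with
        | .atom s => .inl s
        | .coatom j => .inr j
      left_inv := by rintro (s | j) <;> rfl
      right_inv := by rintro (s | j) <;> rfl }

/-- The rank-3 intersection poset with 2 atoms and `k` coatoms, every coatom
covering every atom. -/
abbrev CurvePoset (k : ℕ) : Type := WithBot (WithTop (Mid k))


instance {k : ℕ} : Fintype (CurvePoset k) :=
  inferInstanceAs (Fintype (Option (Option (Mid k))))

def curveRank (k : ℕ) : CurvePoset k → ℕ :=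
  WithBot.recBotCoe 0 (WithTop.recTopCoe 3
    (fun z => match z with | .atom _ => 1 | .coatom _ => 2))

/-! ### Auxiliary material for the proof -/

noncomputable section Aux

variable {k : ℕ}

lemma mid_le_iff (x y : Mid k) :
    x ≤ y ↔ x = y ∨ ∃ s j, x = Mid.atom s ∧ y = Mid.coatom j := Iff.rfl

lemma mid_lt_iff (x y : Mid k) :
    x < y ↔ ∃ s j, x = Mid.atom s ∧ y = Mid.coatom j := by
  constructor
  · rintro ⟨h1, h2⟩
    rcases (mid_le_iff x y).1 h1 with rfl | h
    · exact absurd (Or.inl rfl) h2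
    · exact h
  · rintro ⟨s, j, rfl, rfl⟩
    refine ⟨Or.inr ⟨s, j, rfl, rfl⟩, ?_⟩
    intro h
    rcases (mid_le_iff _ _).1 h with h | ⟨s', j', h, _⟩ <;> simp_all

/-- Embed a middle element into the poset. -/
def el (m : Mid k) : CurvePoset k := ((m : WithTop (Mid k)) : CurvePoset k)

lemma el_injective : Function.Injective (el (k := k)) := by
  intro x y h
  simpa [el] using h

lemma bot_lt_el (m : Mid k) : (⊥ : CurvePoset k) < el m := WithBot.bot_lt_coe _

lemma el_lt_top (m : Mid k) : el m < (⊤ : CurvePoset k) := by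
  show ((m : WithTop (Mid k)) : CurvePoset k) < ((⊤ : WithTop (Mid k)) : CurvePoset k)
  exact WithBot.coe_lt_coe.2 (WithTop.coe_lt_top m)

lemma el_lt_el {m m' : Mid k} (h : m < m') : el m < el m' := by
  exact WithBot.coe_lt_coe.2 (WithTop.coe_lt_coe.2 h)

lemma cp_bot_lt_top : (⊥ : CurvePoset k) < ⊤ := lt_of_lt_of_le (bot_lt_el (Mid.atom true)) le_top

lemma mem_mid {z : CurvePoset k} (h1 : (⊥ : CurvePoset k) < z) (h2 : z < ⊤) :
    ∃ m : Mid k, z = el m := by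
  rcases z with _ | z
  · exact absurd h1 (lt_irrefl _)
  rcases z with _ | m
  · exact absurd h2 (by exact lt_irrefl _)
  · exact ⟨m, rfl⟩

lemma curveRank_bot : curveRank k ⊥ = 0 := rfl
lemma curveRank_top : curveRank k ⊤ = 3 := rfl
lemma curveRank_atom (s : Bool) : curveRank k (el (Mid.atom s)) = 1 := rfl
lemma curveRank_coatom (j : Fin k) : curveRank k (el (Mid.coatom j)) = 2 := rfl

lemma card_mid : Fintype.card (Mid k) = k + 2 := by
  rw [show Fintype.card (Mid k) = Fintype.card (Bool ⊕ Fin k) from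
    (Fintype.ofEquiv_card _)]
  simp [Nat.add_comm]

lemma card_curvePoset : Fintype.card (CurvePoset k) = k + 4 := by
  show Fintype.card (Option (Option (Mid k))) = k + 4
  simp [card_mid]

/-- The generic summand of `PsiI` for chains of length `n`. -/
def Sgen (P : Type) [Fintype P] [PartialOrder P] (ρ : P → ℕ) (zb : P → P → ℤ)
    (lo hi : P) (n : ℕ) : Alg :=
  ∑ f : Fin (n+1) → P,
    if StrictMono f ∧ f 0 = lo ∧ f (Fin.last n) = hi
    then zetaChain zb f • wtChain ρ f else 0

lemma PsiI_eq_sum (P : Type) [Fintype P] [PartialOrder P] (ρ : P → ℕ) (zb : P → P → ℤ)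
    (lo hi : P) :
    PsiI ρ zb lo hi = ∑ n ∈ Finset.range (Fintype.card P + 1), Sgen P ρ zb lo hi n := rfl

/-- The summand of `PsiI` for chains of length `n`. -/
def S (k n : ℕ) : Alg := Sgen (CurvePoset k) (curveRank k) (fun _ _ => (1:ℤ)) ⊥ ⊤ n

lemma psi_eq_sum_S :
    PsiI (curveRank k) (fun _ _ => (1 : ℤ)) ⊥ ⊤ = ∑ n ∈ Finset.range (k + 5), S k n := by
  rw [PsiI_eq_sum, card_curvePoset]
  exact Finset.sum_congr (by norm_num) fun n _ => rfl

lemma S_eq (n : ℕ) : S k n =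
    ∑ f : Fin (n+1) → CurvePoset k,
      if StrictMono f ∧ f 0 = ⊥ ∧ f (Fin.last n) = ⊤
      then wtChain (curveRank k) f else 0 := by
  unfold S Sgen zetaChain
  simp

lemma S_zero : S k 0 = 0 := by
  rw [S_eq]
  refine Finset.sum_eq_zero fun f _ => ?_
  rw [if_neg]
  rintro ⟨-, h0, hl⟩
  rw [show Fin.last 0 = 0 from rfl, h0] at hl
  exact absurd hl.symm (ne_of_gt cp_bot_lt_top)

lemma S_big (n : ℕ) (hn : 4 ≤ n) : S k n = 0 := by
  rw [S_eq]
  refine Finset.sum_eq_zero fun f _ => ?_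
  rw [if_neg]
  rintro ⟨hf, h0, hl⟩
  have l1 : (0 : ℕ) < n + 1 := by omega
  have l2 : (1 : ℕ) < n + 1 := by omega
  have l3 : (2 : ℕ) < n + 1 := by omega
  have l4 : (3 : ℕ) < n + 1 := by omega
  have h01 : f 0 < f ⟨1, l2⟩ := hf (by simp [Fin.lt_def])
  have h12 : f ⟨1, l2⟩ < f ⟨2, l3⟩ := hf (by simp [Fin.lt_def])
  have h23 : f ⟨2, l3⟩ < f ⟨3, l4⟩ := hf (by simp [Fin.lt_def])
  have h3l : f ⟨3, l4⟩ < f (Fin.last n) := hf (by simp [Fin.lt_def]; omega)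
  rw [h0] at h01
  rw [hl] at h3l
  obtain ⟨m1, hm1⟩ := mem_mid h01 (lt_trans h12 (lt_trans h23 h3l))
  obtain ⟨m2, hm2⟩ := mem_mid (lt_trans h01 h12) (lt_trans h23 h3l)
  obtain ⟨m3, hm3⟩ := mem_mid (lt_trans (lt_trans h01 h12) h23) h3l
  rw [hm1, hm2] at h12
  rw [hm2, hm3] at h23
  have hlt12 : m1 < m2 := by
    have := h12; rw [el, el, WithBot.coe_lt_coe, WithTop.coe_lt_coe] at this; exact this
  have hlt23 : m2 < m3 := by
    have := h23; rw [el, el, WithBot.coe_lt_coe, WithTop.coe_lt_coe] at this; exact this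
  obtain ⟨s, j, _, h2c⟩ := (mid_lt_iff _ _).1 hlt12
  obtain ⟨s', j', h2a, _⟩ := (mid_lt_iff _ _).1 hlt23
  rw [h2c] at h2a
  exact absurd h2a (by simp)

lemma S_one : S k 1 = (va - vb) ^ 2 := by
  rw [S_eq]
  rw [Fintype.sum_eq_single (![⊥, ⊤] : Fin 2 → CurvePoset k)]
  · rw [if_pos]
    · simp [wtChain, curveRank_bot, curveRank_top]
    · refine ⟨?_, rfl, rfl⟩
      rw [Fin.strictMono_iff_lt_succ]
      intro i
      fin_cases i
      simpa using cp_bot_lt_top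
  · intro f hf
    rw [if_neg]
    rintro ⟨-, h0, hl⟩
    apply hf
    funext i
    fin_cases i
    · simpa using h0
    · simpa using hl

lemma wt2_atom (s : Bool) :
    wtChain (curveRank k) ![⊥, el (Mid.atom s), ⊤] = vb * (va - vb) := by
  simp [wtChain, curveRank_bot, curveRank_top, curveRank_atom]

lemma wt2_coatom (j : Fin k) :
    wtChain (curveRank k) ![⊥, el (Mid.coatom j), ⊤] = (va - vb) * vb := by
  simp [wtChain, curveRank_bot, curveRank_top, curveRank_coatom]

lemma wt3 (s : Bool) (j : Fin k) :
    wtChain (curveRank k) ![⊥, el (Mid.atom s), el (Mid.coatom j), ⊤] = vb * vb := by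
  simp [wtChain, curveRank_bot, curveRank_top, curveRank_atom, curveRank_coatom,
    show (Fin.castSucc (2 : Fin 3)) = (2 : Fin 4) from rfl,
    show ((2 : Fin 4) : ℕ) = 2 from rfl, Matrix.cons_val_two, Matrix.tail_cons]

def midEquiv (k : ℕ) : Bool ⊕ Fin k ≃ Mid k where
  toFun := fun p => p.elim Mid.atom Mid.coatom
  invFun := fun x => match x with
    | .atom s => .inl s
    | .coatom j => .inr j
  left_inv := by rintro (s | j) <;> rfl
  right_inv := by rintro (s | j) <;> rfl

lemma S_two : S k 2 = 2 • (vb * (va - vb)) + k • ((va - vb) * vb) := by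
  rw [S_eq, ← Finset.sum_filter]
  have himg : (Finset.univ.filter fun f : Fin 3 → CurvePoset k =>
        StrictMono f ∧ f 0 = ⊥ ∧ f (Fin.last 2) = ⊤)
      = Finset.image (fun m : Mid k => (![⊥, el m, ⊤] : Fin 3 → CurvePoset k))
          Finset.univ := by
    ext f
    simp only [Finset.mem_filter, Finset.mem_image, Finset.mem_univ, true_and]
    constructor
    · rintro ⟨hf, h0, hl⟩
      have h01 : f 0 < f 1 := hf (by decide)
      have h1l : f 1 < f (Fin.last 2) := hf (by decide)
      rw [h0] at h01
      rw [hl] at h1l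
      obtain ⟨m, hm⟩ := mem_mid h01 h1l
      refine ⟨m, ?_⟩
      funext i
      fin_cases i
      · exact h0.symm
      · exact hm.symm
      · exact hl.symm
    · rintro ⟨m, rfl⟩
      refine ⟨?_, rfl, rfl⟩
      rw [Fin.strictMono_iff_lt_succ]
      intro i
      fin_cases i
      · simpa using bot_lt_el m
      · simpa using el_lt_top m
  rw [himg, Finset.sum_image (by
    intro m _ m' _ h
    have := congrFun h 1
    simp only [Matrix.cons_val_one, Matrix.head_cons] at this
    exact el_injective this)]
  rw [← Equiv.sum_comp (midEquiv k)]
  rw [Fintype.sum_sum_type]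
  have ha : ∀ s : Bool, (midEquiv k) (Sum.inl s) = Mid.atom s := fun _ => rfl
  have hc : ∀ j : Fin k, (midEquiv k) (Sum.inr j) = Mid.coatom j := fun _ => rfl
  simp only [ha, hc, wt2_atom, wt2_coatom, Finset.sum_const, Finset.card_univ,
    Fintype.card_bool, Fintype.card_fin]

lemma S_three : S k 3 = (2 * k) • (vb * vb) := by
  rw [S_eq, ← Finset.sum_filter]
  have himg : (Finset.univ.filter fun f : Fin 4 → CurvePoset k =>
        StrictMono f ∧ f 0 = ⊥ ∧ f (Fin.last 3) = ⊤)
      = Finset.image (fun p : Bool × Fin k =>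
          (![⊥, el (Mid.atom p.1), el (Mid.coatom p.2), ⊤] : Fin 4 → CurvePoset k))
          Finset.univ := by
    ext f
    simp only [Finset.mem_filter, Finset.mem_image, Finset.mem_univ, true_and]
    constructor
    · rintro ⟨hf, h0, hl⟩
      have h01 : f 0 < f 1 := hf (by decide)
      have h12 : f 1 < f 2 := hf (by decide)
      have h2l : f 2 < f (Fin.last 3) := hf (by decide)
      rw [h0] at h01
      rw [hl] at h2l
      obtain ⟨m1, hm1⟩ := mem_mid h01 (lt_trans h12 h2l)
      obtain ⟨m2, hm2⟩ := mem_mid (lt_trans h01 h12) h2l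
      rw [hm1, hm2] at h12
      have hlt : m1 < m2 := by
        have := h12; rw [el, el, WithBot.coe_lt_coe, WithTop.coe_lt_coe] at this; exact this
      obtain ⟨s, j, hs, hj⟩ := (mid_lt_iff _ _).1 hlt
      refine ⟨(s, j), ?_⟩
      funext i
      fin_cases i
      · exact h0.symm
      · exact (hs ▸ hm1).symm
      · exact (hj ▸ hm2).symm
      · exact hl.symm
    · rintro ⟨⟨s, j⟩, rfl⟩
      refine ⟨?_, rfl, rfl⟩
      rw [Fin.strictMono_iff_lt_succ]
      intro i
      fin_cases i
      · simpa using bot_lt_el (Mid.atom s)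
      · simpa using el_lt_el (k := k) ((mid_lt_iff _ _).2 ⟨s, j, rfl, rfl⟩)
      · simpa using el_lt_top (Mid.coatom j)
  rw [himg, Finset.sum_image (by
    intro p _ p' _ h
    have h1 := congrFun h 1
    have h2 := congrFun h 2
    simp only [Matrix.cons_val_one, Matrix.head_cons] at h1 h2
    have e1 : Mid.atom (k := k) p.1 = Mid.atom p'.1 := el_injective (by simpa using h1)
    have e2 : Mid.coatom (k := k) p.2 = Mid.coatom p'.2 := el_injective (by simpa using h2)
    have : p.1 = p'.1 := by injection e1
    have : p.2 = p'.2 := by injection e2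
    exact Prod.ext ‹p.1 = p'.1› ‹p.2 = p'.2›)]
  simp only [wt3]
  rw [Finset.sum_const]
  simp [two_mul, add_smul]

lemma psi_value :
    PsiI (curveRank k) (fun _ _ => (1 : ℤ)) ⊥ ⊤
      = (va + vb) * (va + ((k : ℤ) - 1) • vb) := by
  rw [psi_eq_sum_S]
  have hsplit : ∑ n ∈ Finset.range (k + 5), S k n
      = (∑ n ∈ Finset.Ico 0 4, S k n) + ∑ n ∈ Finset.Ico 4 (k + 5), S k n := by
    rw [Finset.sum_Ico_consecutive _ (by omega) (by omega), ← Finset.range_eq_Ico]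
  rw [hsplit]
  have h2 : ∑ n ∈ Finset.Ico 4 (k + 5), S k n = 0 :=
    Finset.sum_eq_zero fun n hn => S_big n (Finset.mem_Ico.1 hn).1
  rw [h2, add_zero, ← Finset.range_eq_Ico]
  rw [Finset.sum_range_succ, Finset.sum_range_succ, Finset.sum_range_succ,
    Finset.sum_range_one, S_zero, S_one, S_two, S_three]
  rw [← natCast_zsmul ((va - vb) * vb) k, ← natCast_zsmul (vb * vb) (2 * k),
    ← natCast_zsmul (vb * (va - vb)) 2]
  push_cast
  simp only [mul_add, add_mul, mul_sub, sub_mul, smul_add, smul_sub, sub_smul, add_smul,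
    mul_smul_comm, smul_mul_assoc, one_smul, pow_two, mul_smul]
  abel

/-! ### Part 2: omega and reversal -/

lemma va_eq : va = monoOf [false] := rfl
lemma vb_eq : vb = monoOf [true] := rfl

lemma monoOf_mul (l l' : List Bool) : monoOf l * monoOf l' = monoOf (l ++ l') := by
  unfold monoOf
  rw [← map_mul]
  rfl

lemma toF_mono (l : List Bool) : toF (monoOf l) = Finsupp.single (FreeMonoid.ofList l) 1 := rfl

lemma omegaOp_mono (l : List Bool) : omegaOp (monoOf l) = omegaList l := by
  unfold omegaOp
  rw [toF_mono, Finsupp.sum_single_index (by simp)]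
  simp

lemma omegaOp_add (x y : Alg) : omegaOp (x + y) = omegaOp x + omegaOp y := by
  unfold omegaOp
  exact Finsupp.sum_add_index' (fun w => zero_smul ℤ _) (fun w c1 c2 => add_smul c1 c2 _)

lemma omegaOp_zsmul (n : ℤ) (x : Alg) : omegaOp (n • x) = n • omegaOp x := by
  unfold omegaOp
  have h1 := Finsupp.sum_smul_index' (g := toF x) (b := n)
    (h := fun w c => c • omegaList (FreeMonoid.toList w)) (fun w => zero_smul ℤ _)
  rw [show toF (n • x) = n • toF x from rfl, h1, Finsupp.smul_sum]
  exact Finsupp.sum_congr fun w _ => by rw [smul_assoc]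

lemma revOp_mono (l : List Bool) : revOp (monoOf l) = monoOf l.reverse := by
  unfold revOp
  rw [toF_mono, Finsupp.sum_single_index (by simp)]
  rfl

lemma revOp_add (x y : Alg) : revOp (x + y) = revOp x + revOp y := by
  unfold revOp
  exact Finsupp.sum_add_index' (fun w => MonoidAlgebra.single_zero _) (fun w c1 c2 => MonoidAlgebra.single_add _ c1 c2)

lemma revOp_zsmul (n : ℤ) (x : Alg) : revOp (n • x) = n • revOp x := by
  unfold revOp
  have h1 := Finsupp.sum_smul_index' (g := toF x) (b := n)
    (h := fun w c => (MonoidAlgebra.single (FreeMonoid.ofList (FreeMonoid.toList w).reverse) c : Alg))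
    (fun w => MonoidAlgebra.single_zero _)
  rw [show toF (n • x) = n • toF x from rfl, h1, Finsupp.smul_sum]
  refine Finsupp.sum_congr fun w _ => ?_
  rw [MonoidAlgebra.smul_single]

end Aux

/-- for the intersection poset `P` of two closed curves on `S²`
meeting in `2k` points (2 atoms, `k` coatoms, full covering relations),
`Ψ(P) = (a+b)(a+(k-1)b)` and `ω(a·Ψ(P))* = c³ + 2(k-1)·dc + 2k·cd`. -/
theorem two_curves_on_sphere (k : ℕ) :
    PsiI (curveRank k) (fun _ _ => (1 : ℤ)) ⊥ ⊤
        = (va + vb) * (va + ((k : ℤ) - 1) • vb) ∧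
      revOp (omegaOp (va * PsiI (curveRank k) (fun _ _ => (1 : ℤ)) ⊥ ⊤))
        = (va + vb) ^ 3 + (2 * ((k : ℤ) - 1)) • ((va * vb + vb * va) * (va + vb))
            + (2 * (k : ℤ)) • ((va + vb) * (va * vb + vb * va)) := by
  refine ⟨psi_value, ?_⟩
  rw [psi_value]
  have hX : va * ((va + vb) * (va + ((k : ℤ) - 1) • vb))
      = monoOf [false, false, false] + ((k:ℤ)-1) • monoOf [false, false, true]
        + monoOf [false, true, false] + ((k:ℤ)-1) • monoOf [false, true, true] := by
    rw [va_eq, vb_eq]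
    simp only [mul_add, add_mul, mul_smul_comm, monoOf_mul, List.cons_append,
      List.nil_append]
    module
  rw [hX]
  simp only [omegaOp_add, omegaOp_zsmul, omegaOp_mono]
  simp only [omegaList]
  simp only [va_eq, vb_eq, mul_one, one_mul, mul_add, add_mul, smul_mul_assoc,
    mul_smul_comm, smul_add, monoOf_mul, List.cons_append, List.nil_append]
  simp only [revOp_add, revOp_zsmul, revOp_mono, List.reverse_cons, List.reverse_nil,
    List.nil_append, List.cons_append]
  simp only [pow_succ, pow_zero, mul_one, one_mul, mul_add, add_mul, smul_mul_assoc,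
    mul_smul_comm, smul_add, monoOf_mul, List.cons_append, List.nil_append]
  module
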